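/- Let (T(t))_{t≥0} be a C₀-semigroup on a complex Banach space X with ‖T(t)‖ ≤ M for all t ≥ 0, where M ≥ 1, and let A be its infinitesimal generator. Suppose there exist ζ ∈ ℂ with |ζ| = 1 and K ≥ 1/2 such that ‖(ζI − T(t))x‖ ≥ ‖x‖/K for all x ∈ X and all t > 0, and write ζ = e^{iθ₁} = e^{−iθ₂} with θ₁, θ₂ > 0. Then for every real α ≠ 0 one has iα ∈ ρ(A) and ‖R(iα,A)‖ ≤ C/|α|, where C := M·K·max(θ₁,θ₂). -/

import Mathlib

open Filter Topology

universe u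

/-- A strongly continuous one-parameter semigroup of bounded operators on a complex
Banach space. -/
def IsC0Semigroup {X : Type u} [NormedAddCommGroup X] [NormedSpace ℂ X]
    (T : ℝ → X →L[ℂ] X) : Prop :=
  T 0 = 1 ∧ (∀ s t : ℝ, 0 ≤ s → 0 ≤ t → T (s + t) = (T s).comp (T t)) ∧
    ∀ x : X, Tendsto (fun t => T t x) (nhdsWithin 0 (Set.Ioi 0)) (nhds x)

/-- `A` (with domain `dom`) is the infinitesimal generator of the semigroup `T`. -/
def IsGenerator {X : Type u} [NormedAddCommGroup X] [NormedSpace ℂ X]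
    (T : ℝ → X →L[ℂ] X) (dom : Set X) (A : X → X) : Prop :=
  (∀ x : X, x ∈ dom ↔ ∃ y : X,
      Tendsto (fun h : ℝ => (h : ℂ)⁻¹ • (T h x - x)) (nhdsWithin 0 (Set.Ioi 0)) (nhds y)) ∧
    ∀ x ∈ dom,
      Tendsto (fun h : ℝ => (h : ℂ)⁻¹ • (T h x - x)) (nhdsWithin 0 (Set.Ioi 0)) (nhds (A x))

/-- `R` is the resolvent of `A` (with domain `dom`) at `lam`. -/
def IsResolventAt {X : Type u} [NormedAddCommGroup X] [NormedSpace ℂ X]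
    (dom : Set X) (A : X → X) (lam : ℂ) (R : X →L[ℂ] X) : Prop :=
  (∀ y : X, R y ∈ dom) ∧ (∀ y : X, lam • R y - A (R y) = y) ∧
    ∀ x ∈ dom, R (lam • x - A x) = x

section Aux

variable {X : Type u} [NormedAddCommGroup X] [NormedSpace ℂ X] [CompleteSpace X]
variable {T : ℝ → X →L[ℂ] X} {M : ℝ}

lemma c0_tendsto_zero (hT : IsC0Semigroup T) (x : X) :
    Tendsto (fun h : ℝ => T h x - x) (nhdsWithin 0 (Set.Ici 0)) (nhds 0) := by
  have : Set.Ici (0:ℝ) = insert 0 (Set.Ioi 0) := by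
    rw [Set.Ioi_insert]
  rw [this, nhdsWithin_insert, tendsto_sup]
  constructor
  · rw [tendsto_pure_left]
    intro s hs
    simp only [hT.1, ContinuousLinearMap.one_apply, sub_self] at *
    exact mem_of_mem_nhds hs
  · simpa using (hT.2.2 x).sub (tendsto_const_nhds (f := nhdsWithin (0:ℝ) (Set.Ioi 0)) (x := x))

lemma c0_continuousOn (hT : IsC0Semigroup T) (hTM : ∀ t : ℝ, 0 ≤ t → ‖T t‖ ≤ M) (x : X) :
    ContinuousOn (fun s => T s x) (Set.Ici (0:ℝ)) := by
  intro s₀ hs₀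
  simp only [Set.mem_Ici] at hs₀
  have key : ∀ s ∈ Set.Ici (0:ℝ), ‖T s x - T s₀ x‖ ≤ M * ‖T (|s - s₀|) x - x‖ := by
    intro s hs
    simp only [Set.mem_Ici] at hs
    rcases le_total s₀ s with h | h
    · have habs : |s - s₀| = s - s₀ := abs_of_nonneg (by linarith)
      have : T s = (T s₀).comp (T (s - s₀)) := by
        have := hT.2.1 s₀ (s - s₀) hs₀ (by linarith)
        rwa [add_sub_cancel] at this
      rw [habs, this]
      calc ‖(T s₀).comp (T (s - s₀)) x - T s₀ x‖ = ‖T s₀ (T (s - s₀) x - x)‖ := by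
            simp [ContinuousLinearMap.comp_apply, map_sub]
        _ ≤ ‖T s₀‖ * ‖T (s - s₀) x - x‖ := (T s₀).le_opNorm _
        _ ≤ M * ‖T (s - s₀) x - x‖ :=
            mul_le_mul_of_nonneg_right (hTM s₀ hs₀) (norm_nonneg _)
    · have habs : |s - s₀| = s₀ - s := by rw [abs_sub_comm]; exact abs_of_nonneg (by linarith)
      have : T s₀ = (T s).comp (T (s₀ - s)) := by
        have := hT.2.1 s (s₀ - s) hs (by linarith)
        rwa [add_sub_cancel] at this
      rw [habs, this]
      calc ‖T s x - (T s).comp (T (s₀ - s)) x‖ = ‖T s (x - T (s₀ - s) x)‖ := by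
            simp [ContinuousLinearMap.comp_apply, map_sub]
        _ ≤ ‖T s‖ * ‖x - T (s₀ - s) x‖ := (T s).le_opNorm _
        _ ≤ M * ‖T (s₀ - s) x - x‖ := by
            rw [norm_sub_rev x]
            exact mul_le_mul_of_nonneg_right (hTM s hs) (norm_nonneg _)
  have habs_tendsto : Tendsto (fun s => |s - s₀|) (nhdsWithin s₀ (Set.Ici 0))
      (nhdsWithin 0 (Set.Ici 0)) := by
    rw [tendsto_nhdsWithin_iff]
    constructor
    · have : Tendsto (fun s => |s - s₀|) (nhds s₀) (nhds 0) := by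
        have h1 : Tendsto (fun s : ℝ => s - s₀) (nhds s₀) (nhds (s₀ - s₀)) :=
          (continuous_id.sub continuous_const).tendsto s₀
        rw [sub_self] at h1
        simpa using h1.abs
      exact this.mono_left nhdsWithin_le_nhds
    · exact Eventually.of_forall fun s => Set.mem_Ici.2 (abs_nonneg _)
  have hM0 : Tendsto (fun s => M * ‖T (|s - s₀|) x - x‖) (nhdsWithin s₀ (Set.Ici 0)) (nhds 0) := by
    have := ((c0_tendsto_zero hT x).comp habs_tendsto).norm
    simpa using this.const_mul M
  have hsub : Tendsto (fun s => T s x - T s₀ x) (nhdsWithin s₀ (Set.Ici 0)) (nhds 0) := by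
    apply squeeze_zero_norm' _ hM0
    filter_upwards [self_mem_nhdsWithin] with s hs using key s hs
  have := hsub.add (tendsto_const_nhds (x := T s₀ x))
  simpa [ContinuousWithinAt] using this

lemma c0_continuousAt (hT : IsC0Semigroup T) (hTM : ∀ t : ℝ, 0 ≤ t → ‖T t‖ ≤ M) (x : X)
    {s₀ : ℝ} (hs₀ : 0 < s₀) : ContinuousAt (fun s => T s x) s₀ :=
  (c0_continuousOn hT hTM x s₀ (le_of_lt hs₀)).continuousAt (Ici_mem_nhds hs₀)

lemma c0_orbit_hasDerivWithinAt (hT : IsC0Semigroup T) {dom : Set X} {A : X → X}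
    (hA : IsGenerator T dom A) {x : X} (hx : x ∈ dom) {t : ℝ} (ht : 0 ≤ t) :
    HasDerivWithinAt (fun u => T u x) (T t (A x)) (Set.Ici t) t := by
  rw [hasDerivWithinAt_iff_tendsto_slope, Set.Ici_sdiff_left]
  have hmap : Tendsto (fun u : ℝ => u - t) (nhdsWithin t (Set.Ioi t))
      (nhdsWithin 0 (Set.Ioi 0)) := by
    rw [tendsto_nhdsWithin_iff]
    constructor
    · have h1 : Tendsto (fun u : ℝ => u - t) (nhds t) (nhds (t - t)) :=
        (continuous_id.sub continuous_const).tendsto t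
      rw [sub_self] at h1
      exact h1.mono_left nhdsWithin_le_nhds
    · filter_upwards [self_mem_nhdsWithin] with u hu
      exact Set.mem_Ioi.2 (sub_pos.2 hu)
  have hgen := (hA.2 x hx).comp hmap
  have htend := ((T t).continuous.tendsto (A x)).comp hgen
  apply htend.congr'
  filter_upwards [self_mem_nhdsWithin] with u hu
  have hu' : t < u := hu
  have hcomp : T u = (T t).comp (T (u - t)) := by
    have := hT.2.1 t (u - t) ht (by linarith)
    rwa [add_sub_cancel] at this
  show T t (((u - t : ℝ) : ℂ)⁻¹ • (T (u - t) x - x)) = slope (fun u => T u x) t u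
  rw [slope_def_module, hcomp, map_smul, ← Complex.ofReal_inv, Complex.coe_smul]
  congr 1
  simp [ContinuousLinearMap.comp_apply, map_sub]

lemma exp_hasDerivAt (lam : ℂ) (t : ℝ) :
    HasDerivAt (fun u : ℝ => Complex.exp (-(lam * u))) (-lam * Complex.exp (-(lam * t))) t := by
  have h0 : HasDerivAt (fun u : ℝ => (u : ℂ)) 1 t := by
    simpa using (hasDerivAt_id t).ofReal_comp
  have h1 : HasDerivAt (fun u : ℝ => -(lam * (u : ℂ))) (-lam) t := by
    have := (h0.const_mul lam).neg
    rw [mul_one] at this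
    exact this
  have := h1.cexp
  simpa [mul_comm] using this

lemma sgInt_continuousOn (hT : IsC0Semigroup T) (hTM : ∀ t : ℝ, 0 ≤ t → ‖T t‖ ≤ M)
    (lam : ℂ) (x : X) :
    ContinuousOn (fun s : ℝ => Complex.exp (-(lam * s)) • T s x) (Set.Ici (0:ℝ)) := by
  apply ContinuousOn.smul _ (c0_continuousOn hT hTM x)
  exact (Complex.continuous_exp.comp
    ((continuous_const.mul Complex.continuous_ofReal).neg)).continuousOn

lemma sgInt_integrable (hT : IsC0Semigroup T) (hTM : ∀ t : ℝ, 0 ≤ t → ‖T t‖ ≤ M)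
    (lam : ℂ) (x : X) {a b : ℝ} (ha : 0 ≤ a) (hb : 0 ≤ b) :
    IntervalIntegrable (fun s : ℝ => Complex.exp (-(lam * s)) • T s x) MeasureTheory.volume a b := by
  apply ContinuousOn.intervalIntegrable
  apply (sgInt_continuousOn hT hTM lam x).mono
  intro s hs
  rcases Set.mem_uIcc.1 hs with ⟨h1, _⟩ | ⟨h1, _⟩
  · exact le_trans ha h1
  · exact le_trans hb h1

lemma sgInt_smaf (hT : IsC0Semigroup T) (hTM : ∀ t : ℝ, 0 ≤ t → ‖T t‖ ≤ M)
    (lam : ℂ) (x : X) {l : Filter ℝ} (hl : Set.Ici (0:ℝ) ∈ l) :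
    StronglyMeasurableAtFilter (fun s : ℝ => Complex.exp (-(lam * s)) • T s x) l
      MeasureTheory.volume :=
  AEStronglyMeasurable.stronglyMeasurableAtFilter_of_mem
    ((sgInt_continuousOn hT hTM lam x).aestronglyMeasurable measurableSet_Ici) hl

lemma c0_L1 (hT : IsC0Semigroup T) (hTM : ∀ t : ℝ, 0 ≤ t → ‖T t‖ ≤ M)
    {dom : Set X} {A : X → X} (hA : IsGenerator T dom A) {x : X} (hx : x ∈ dom)
    (lam : ℂ) {b : ℝ} (hb : 0 ≤ b) :
    Complex.exp (-(lam * b)) • T b x =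
      x - ∫ s in (0:ℝ)..b, Complex.exp (-(lam * s)) • T s (lam • x - A x) := by
  set z := lam • x - A x with hz
  set f' : ℝ → X := fun u =>
    Complex.exp (-(lam * u)) • T u (A x) - Complex.exp (-(lam * u)) • lam • T u x with hf'
  have derivf : ∀ u ∈ Set.Ico 0 b,
      HasDerivWithinAt (fun u : ℝ => Complex.exp (-(lam * u)) • T u x) (f' u) (Set.Ici u) u := by
    intro u hu
    have h1 := (exp_hasDerivAt lam u).hasDerivWithinAt (s := Set.Ici u)
    have h2 := c0_orbit_hasDerivWithinAt hT hA hx hu.1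
    have h3 := h1.smul h2
    convert h3 using 1
    show Complex.exp (-(lam * u)) • T u (A x) - Complex.exp (-(lam * u)) • lam • T u x =
      Complex.exp (-(lam * u)) • T u (A x) + (-lam * Complex.exp (-(lam * u))) • T u x
    module
    rfl
  have derivg : ∀ u ∈ Set.Ico 0 b,
      HasDerivWithinAt (fun u : ℝ => x - ∫ s in (0:ℝ)..u, Complex.exp (-(lam * s)) • T s z)
        (f' u) (Set.Ici u) u := by
    intro u hu
    have hF : HasDerivWithinAt (fun u : ℝ => ∫ s in (0:ℝ)..u, Complex.exp (-(lam * s)) • T s z)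
        (Complex.exp (-(lam * u)) • T u z) (Set.Ici u) u := by
      apply intervalIntegral.integral_hasDerivWithinAt_right
        (sgInt_integrable hT hTM lam z le_rfl hu.1) (t := Set.Ioi u)
      · exact sgInt_smaf hT hTM lam z
          (Filter.mem_of_superset self_mem_nhdsWithin fun s hs => le_of_lt (lt_of_le_of_lt hu.1 hs))
      · exact ((sgInt_continuousOn hT hTM lam z) u hu.1).mono
          (fun s hs => le_of_lt (lt_of_le_of_lt hu.1 hs))
    have := hF.const_sub x
    convert this using 1
    show Complex.exp (-(lam * u)) • T u (A x) - Complex.exp (-(lam * u)) • lam • T u x =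
      -(Complex.exp (-(lam * u)) • T u z)
    rw [hz, map_sub, map_smul, smul_sub, neg_sub]
  have fcont : ContinuousOn (fun u : ℝ => Complex.exp (-(lam * u)) • T u x) (Set.Icc 0 b) :=
    (sgInt_continuousOn hT hTM lam x).mono (fun s hs => hs.1)
  have gcont : ContinuousOn
      (fun u : ℝ => x - ∫ s in (0:ℝ)..u, Complex.exp (-(lam * s)) • T s z) (Set.Icc 0 b) := by
    apply ContinuousOn.sub continuousOn_const
    have huIcc : Set.uIcc (0:ℝ) b = Set.Icc 0 b := Set.uIcc_of_le hb
    rw [← huIcc]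
    apply intervalIntegral.continuousOn_primitive_interval'
      (sgInt_integrable hT hTM lam z le_rfl hb)
    rw [huIcc]
    exact Set.left_mem_Icc.2 hb
  have h0 : (fun u : ℝ => Complex.exp (-(lam * u)) • T u x) 0 =
      (fun u : ℝ => x - ∫ s in (0:ℝ)..u, Complex.exp (-(lam * s)) • T s z) 0 := by
    simp [hT.1]
  have := eq_of_has_deriv_right_eq derivf derivg fcont gcont h0 b (Set.right_mem_Icc.2 hb)
  simpa using this

lemma c0_L2 (hT : IsC0Semigroup T) (hTM : ∀ t : ℝ, 0 ≤ t → ‖T t‖ ≤ M)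
    (lam : ℂ) {t₀ : ℝ} (ht₀ : 0 < t₀) (x : X) :
    Tendsto (fun h : ℝ => (h : ℂ)⁻¹ •
        (T h (∫ s in (0:ℝ)..t₀, Complex.exp (-(lam * s)) • T s x) -
          ∫ s in (0:ℝ)..t₀, Complex.exp (-(lam * s)) • T s x))
      (nhdsWithin 0 (Set.Ioi 0))
      (nhds (lam • (∫ s in (0:ℝ)..t₀, Complex.exp (-(lam * s)) • T s x) - x +
        Complex.exp (-(lam * t₀)) • T t₀ x)) := by
  set F : ℝ → X := fun u => ∫ s in (0:ℝ)..u, Complex.exp (-(lam * s)) • T s x with hF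
  set G : ℝ → X := fun h => Complex.exp (lam * h) • (F (t₀ + h) - F h) with hG
  have hF0 : F 0 = 0 := intervalIntegral.integral_same
  have hG0 : G 0 = F t₀ := by
    simp only [hG, Complex.ofReal_zero, mul_zero, Complex.exp_zero, one_smul, add_zero, hF0,
      sub_zero]
  have claim1 : ∀ h : ℝ, 0 ≤ h → T h (F t₀) - F t₀ = G h - G 0 := by
    intro h hh
    rw [hG0]
    have step1 : T h (F t₀) = ∫ s in (0:ℝ)..t₀, T h (Complex.exp (-(lam * s)) • T s x) :=
      ((T h).intervalIntegral_comp_comm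
        (sgInt_integrable hT hTM lam x le_rfl (le_of_lt ht₀))).symm
    have step2 : (∫ s in (0:ℝ)..t₀, T h (Complex.exp (-(lam * s)) • T s x)) =
        ∫ s in (0:ℝ)..t₀, Complex.exp (lam * h) •
          (Complex.exp (-(lam * (s + h))) • T (s + h) x) := by
      apply intervalIntegral.integral_congr
      intro s hs
      have hs0 : 0 ≤ s := by
        rcases Set.mem_uIcc.1 hs with ⟨h1, _⟩ | ⟨h1, _⟩
        · exact h1
        · exact le_trans (le_of_lt ht₀) h1
      have hTs : T h (T s x) = T (s + h) x := by
        have e1 := hT.2.1 h s hh hs0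
        have e2 : h + s = s + h := add_comm h s
        rw [← e2, e1]
        simp [ContinuousLinearMap.comp_apply]
      beta_reduce
      rw [map_smul, hTs, smul_smul, ← Complex.exp_add]
      congr 2
      push_cast
      ring
    have step3 : (∫ s in (0:ℝ)..t₀, Complex.exp (lam * h) •
          (Complex.exp (-(lam * (s + h))) • T (s + h) x)) =
        Complex.exp (lam * h) •
          ∫ s in (0:ℝ)..t₀, Complex.exp (-(lam * (s + h))) • T (s + h) x :=
      intervalIntegral.integral_smul _ _
    have step4 : (∫ s in (0:ℝ)..t₀, Complex.exp (-(lam * (s + h))) • T (s + h) x) =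
        ∫ u in h..(t₀ + h), Complex.exp (-(lam * u)) • T u x := by
      have := intervalIntegral.integral_comp_add_right
        (a := (0:ℝ)) (b := t₀) (fun u : ℝ => Complex.exp (-(lam * u)) • T u x) h
      simpa using this
    have step5 : (∫ u in h..(t₀ + h), Complex.exp (-(lam * u)) • T u x) =
        F (t₀ + h) - F h := by
      have := intervalIntegral.integral_interval_sub_left
        (sgInt_integrable hT hTM lam x (le_refl 0) (show (0:ℝ) ≤ t₀ + h by linarith))
        (sgInt_integrable hT hTM lam x (le_refl 0) hh)
      rw [← this]
    rw [step1, step2, step3, step4, step5, hG]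
  -- derivative of G at 0 within Ici 0
  have hexpcont : Continuous (fun s : ℝ => Complex.exp (-(lam * s))) :=
    Complex.continuous_exp.comp ((continuous_const.mul Complex.continuous_ofReal).neg)
  have hc : HasDerivAt (fun u : ℝ => Complex.exp (lam * u)) lam 0 := by
    have h0 : HasDerivAt (fun u : ℝ => (u : ℂ)) 1 0 := by
      simpa using (hasDerivAt_id (0:ℝ)).ofReal_comp
    have := (h0.const_mul lam).cexp
    simpa using this
  have hFt : HasDerivAt F (Complex.exp (-(lam * t₀)) • T t₀ x) t₀ := by
    apply intervalIntegral.integral_hasDerivAt_right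
      (sgInt_integrable hT hTM lam x le_rfl (le_of_lt ht₀))
    · exact sgInt_smaf hT hTM lam x
        (Filter.mem_of_superset (Ioi_mem_nhds ht₀) (fun s hs => Set.mem_Ici.2 (le_of_lt hs)))
    · exact (hexpcont.continuousAt).smul (c0_continuousAt hT hTM x ht₀)
  have hF1 : HasDerivAt (fun h : ℝ => F (t₀ + h)) (Complex.exp (-(lam * t₀)) • T t₀ x) 0 := by
    have hshift : HasDerivAt (fun h : ℝ => t₀ + h) 1 0 := by
      simpa using (hasDerivAt_id (0:ℝ)).const_add t₀
    have := HasDerivAt.scomp_of_eq (x := (0:ℝ)) hFt hshift (by norm_num)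
    rw [one_smul] at this
    exact this
  have hF0' : HasDerivWithinAt F x (Set.Ici 0) 0 := by
    have : HasDerivWithinAt F (Complex.exp (-(lam * (0:ℝ))) • T 0 x) (Set.Ici 0) 0 := by
      apply intervalIntegral.integral_hasDerivWithinAt_right
        (sgInt_integrable hT hTM lam x le_rfl le_rfl) (t := Set.Ioi 0)
      · exact sgInt_smaf hT hTM lam x
          (Filter.mem_of_superset self_mem_nhdsWithin (fun s hs => Set.mem_Ici.2 (le_of_lt hs)))
      · exact ((sgInt_continuousOn hT hTM lam x) 0 Set.self_mem_Ici).mono (fun s hs => Set.mem_Ici.2 (le_of_lt hs))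
    simpa [hT.1] using this
  have hu : HasDerivWithinAt (fun h : ℝ => F (t₀ + h) - F h)
      (Complex.exp (-(lam * t₀)) • T t₀ x - x) (Set.Ici 0) 0 :=
    hF1.hasDerivWithinAt.sub hF0'
  have hGd : HasDerivWithinAt G
      (lam • F t₀ - x + Complex.exp (-(lam * t₀)) • T t₀ x) (Set.Ici 0) 0 := by
    have := (hc.hasDerivWithinAt).smul hu
    convert this using 1
    show lam • F t₀ - x + Complex.exp (-(lam * t₀)) • T t₀ x =
      Complex.exp (lam * (0:ℝ)) • (Complex.exp (-(lam * t₀)) • T t₀ x - x) +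
        lam • ((fun h : ℝ => F (t₀ + h) - F h) 0)
    simp only [Complex.ofReal_zero, mul_zero, Complex.exp_zero, one_smul, add_zero, hF0, sub_zero]
    abel
    rfl
  rw [hasDerivWithinAt_iff_tendsto_slope, Set.Ici_sdiff_left] at hGd
  apply hGd.congr'
  filter_upwards [self_mem_nhdsWithin] with h hh
  have hh' : 0 < h := hh
  rw [slope_def_module, ← claim1 h (le_of_lt hh'), sub_zero, ← Complex.ofReal_inv,
    Complex.coe_smul]

lemma isUnit_one_sub_of_pow {R : Type*} [NormedRing R] [CompleteSpace R] {t : R} {m : ℕ}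
    (h : ‖t ^ m‖ < 1) : IsUnit ((1:R) - t) := by
  set w : Rˣ := Units.oneSub (t ^ m) h with hw
  have hwval : (w : R) = 1 - t ^ m := rfl
  set S : R := ∑ k ∈ Finset.range m, t ^ k with hS
  have h1 : (1 - t) * S = 1 - t ^ m := by
    rw [← neg_sub t (1:R), neg_mul, mul_geom_sum, neg_sub]
  have h2 : S * (1 - t) = 1 - t ^ m := by
    rw [← neg_sub t (1:R), mul_neg, geom_sum_mul, neg_sub]
  have c1 : Commute t (t ^ m) := (Commute.refl t).pow_right m
  have c2 : Commute ((1:R) - t) ((1:R) - t ^ m) :=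
    Commute.sub_left (Commute.one_left _) (Commute.sub_right (Commute.one_right t) c1)
  have c3 : Commute ((1:R) - t) (↑w⁻¹ : R) := by
    apply Commute.units_inv_right
    rw [hwval] at *
    exact c2
  refine ⟨⟨1 - t, S * (↑w⁻¹ : R), ?_, ?_⟩, rfl⟩
  · rw [← mul_assoc, h1, ← hwval, Units.mul_inv]
  · rw [mul_assoc, ← c3.eq, ← mul_assoc, h2, ← hwval, Units.mul_inv]

end Aux

set_option maxHeartbeats 2000000 in
/-- Quantitative step in Kato's theorem: if `(T t)` is a `C₀`-semigroup with
`‖T t‖ ≤ M`, and `‖(ζ I - T t) x‖ ≥ ‖x‖/K` for a unimodular `ζ = e^{iθ₁} = e^{-iθ₂}`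
(`θ₁, θ₂ > 0`) and all `t > 0`, then every nonzero point `iα` of the imaginary axis
is in the resolvent set of the generator `A` and
`‖R(iα, A)‖ ≤ M K max(θ₁, θ₂) / |α|`. -/
theorem stmt17 {X : Type u} [NormedAddCommGroup X] [NormedSpace ℂ X] [CompleteSpace X]
    (T : ℝ → X →L[ℂ] X) (hT : IsC0Semigroup T)
    (M : ℝ) (hM : 1 ≤ M) (hTM : ∀ t : ℝ, 0 ≤ t → ‖T t‖ ≤ M)
    (dom : Set X) (A : X → X) (hA : IsGenerator T dom A)
    (ζ : ℂ) (hζ : ‖ζ‖ = 1) (K : ℝ) (hK : 1 / 2 ≤ K)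
    (hlow : ∀ t : ℝ, 0 < t → ∀ x : X, ‖x‖ / K ≤ ‖ζ • x - T t x‖)
    (θ₁ θ₂ : ℝ) (hθ₁ : 0 < θ₁) (hθ₂ : 0 < θ₂)
    (hζ₁ : Complex.exp ((θ₁ : ℂ) * Complex.I) = ζ)
    (hζ₂ : Complex.exp (-(θ₂ : ℂ) * Complex.I) = ζ) :
    ∀ α : ℝ, α ≠ 0 → ∃ R : X →L[ℂ] X,
      IsResolventAt dom A ((α : ℂ) * Complex.I) R ∧
      ‖R‖ ≤ M * K * max θ₁ θ₂ / |α| := by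
  intro α hα
  set lam : ℂ := (α : ℂ) * Complex.I with hlam
  have hK0 : (0:ℝ) < K := lt_of_lt_of_le (by norm_num) hK
  have hM0 : (0:ℝ) < M := lt_of_lt_of_le one_pos hM
  have hα0 : 0 < |α| := abs_pos.2 hα
  set θ : ℝ := if 0 < α then θ₁ else θ₂ with hθdef
  have hθpos : 0 < θ := by
    rw [hθdef]; split_ifs
    · exact hθ₁
    · exact hθ₂
  have hθmax : θ ≤ max θ₁ θ₂ := by
    rw [hθdef]; split_ifs
    · exact le_max_left _ _
    · exact le_max_right _ _
  set t₀ : ℝ := θ / |α| with ht₀def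
  have ht₀ : 0 < t₀ := div_pos hθpos hα0
  have hζ0 : ζ ≠ 0 := by
    intro h; rw [h, norm_zero] at hζ; norm_num at hζ
  have hexp : Complex.exp (-(lam * t₀)) = ζ⁻¹ := by
    have hmul : lam * (t₀ : ℂ) = ((α * t₀ : ℝ) : ℂ) * Complex.I := by
      rw [hlam]; push_cast; ring
    rcases lt_or_gt_of_ne hα with hneg | hpos
    · have hθ' : θ = θ₂ := if_neg (not_lt.2 (le_of_lt hneg))
      have hat : α * t₀ = -θ₂ := by
        rw [ht₀def, hθ', abs_of_neg hneg, div_neg, mul_neg, ← mul_div_assoc,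
          mul_div_cancel_left₀ _ hα]
      rw [hmul, hat, ← hζ₂]
      rw [← Complex.exp_neg]
      congr 1
      push_cast; ring
    · have hθ' : θ = θ₁ := if_pos hpos
      have hat : α * t₀ = θ₁ := by
        rw [ht₀def, hθ', abs_of_pos hpos, ← mul_div_assoc, mul_div_cancel_left₀ _ hα]
      rw [hmul, hat, ← hζ₁, ← Complex.exp_neg]
  set c : ℂ := Complex.exp (-(lam * t₀)) with hc
  have hc_inv : ζ * c = 1 := by rw [hexp]; exact mul_inv_cancel₀ hζ0
  have hcnorm : ‖c‖ = 1 := by rw [hexp, norm_inv, hζ, inv_one]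
  set B : X →L[ℂ] X := c • T t₀ with hB
  set V : X →L[ℂ] X := 1 - B with hV
  have hVapp : ∀ x : X, V x = x - c • T t₀ x := by
    intro x
    rw [hV, hB]
    simp [ContinuousLinearMap.sub_apply, ContinuousLinearMap.smul_apply,
      ContinuousLinearMap.one_apply]
  have hVlow : ∀ x : X, ‖x‖ ≤ K * ‖V x‖ := by
    intro x
    have h1 : ζ • V x = ζ • x - T t₀ x := by
      rw [hVapp, smul_sub, smul_smul, hc_inv, one_smul]
    have h2 : ‖V x‖ = ‖ζ • x - T t₀ x‖ := by
      rw [← h1, norm_smul, hζ, one_mul]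
    have h3 := hlow t₀ ht₀ x
    rw [← h2] at h3
    calc ‖x‖ = ‖x‖ / K * K := by field_simp
      _ ≤ ‖V x‖ * K := mul_le_mul_of_nonneg_right h3 (le_of_lt hK0)
      _ = K * ‖V x‖ := mul_comm _ _
  have hTpow : ∀ n : ℕ, (T t₀) ^ n = T (n * t₀) := by
    intro n
    induction n with
    | zero => simp [hT.1]
    | succ n ih =>
      have hcomp := hT.2.1 (n * t₀) t₀ (by positivity) (le_of_lt ht₀)
      rw [pow_succ, ih, show (((n+1 : ℕ)):ℝ) * t₀ = n * t₀ + t₀ by push_cast; ring, hcomp]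
      rfl
  have hBpow : ∀ n : ℕ, ‖B ^ n‖ ≤ M := by
    intro n
    apply ContinuousLinearMap.opNorm_le_bound _ hM0.le
    intro z
    have happ : (B ^ n) z = c ^ n • (T (n * t₀)) z := by
      rw [hB, smul_pow, ContinuousLinearMap.smul_apply, hTpow]
    rw [happ, norm_smul, norm_pow, hcnorm, one_pow, one_mul]
    exact le_trans ((T _).le_opNorm z)
      (mul_le_mul_of_nonneg_right (hTM _ (by positivity)) (norm_nonneg _))
  have hVinj : Function.Injective V := by
    intro a b hab
    have h1 : ‖a - b‖ ≤ K * ‖V (a - b)‖ := hVlow _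
    rw [map_sub, hab, sub_self, norm_zero, mul_zero] at h1
    exact sub_eq_zero.1 (norm_le_zero_iff.1 h1)
  have hanti : AntilipschitzWith K.toNNReal V := by
    apply V.antilipschitz_of_bound
    intro x
    rw [Real.coe_toNNReal K (le_of_lt hK0)]
    exact hVlow x
  have hclosed : IsClosed (Set.range V) := hanti.isClosed_range V.uniformContinuous
  have hBnorm : ∀ z : X, ‖B z‖ ≤ M * ‖z‖ := by
    intro z
    have h1 : ‖B‖ ≤ M := by
      have := hBpow 1
      rwa [pow_one] at this
    calc ‖B z‖ ≤ ‖B‖ * ‖z‖ := B.le_opNorm z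
      _ ≤ M * ‖z‖ := mul_le_mul_of_nonneg_right h1 (norm_nonneg _)
  have hVsurj : Function.Surjective V := by
    intro y
    have hmem : y ∈ closure (Set.range V) := by
      rw [Metric.mem_closure_iff]
      intro ε hε
      set η : ℝ := min (1 / (2 * K * M)) (ε / (2 * M * K * ‖y‖ + 1)) with hη
      have hη0 : 0 < η := lt_min (by positivity) (by positivity)
      have hη1 : η ≤ 1 := by
        apply le_trans (min_le_left _ _)
        rw [div_le_one (by positivity)]
        nlinarith
      have hη2 : η ≤ 1 / (2 * K * M) := min_le_left _ _
      have hη3 : η ≤ ε / (2 * M * K * ‖y‖ + 1) := min_le_right _ _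
      set r : ℝ := 1 - η with hr
      have hr0 : 0 ≤ r := by rw [hr]; linarith
      have hr1 : r < 1 := by rw [hr]; linarith
      obtain ⟨m, hm⟩ : ∃ m : ℕ, r ^ m < 1 / M := exists_pow_lt_of_lt_one (by positivity) hr1
      have hunit : IsUnit ((1 : X →L[ℂ] X) - (r : ℂ) • B) := by
        apply isUnit_one_sub_of_pow (m := m)
        have hrn : ‖(r : ℂ)‖ = r := by
          rw [Complex.norm_real, Real.norm_eq_abs]; exact abs_of_nonneg hr0
        have hSle : ‖((r : ℂ) • B) ^ m‖ ≤ r ^ m * M := by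
          apply ContinuousLinearMap.opNorm_le_bound _ (by positivity)
          intro z
          have happ : (((r : ℂ) • B) ^ m) z = (r : ℂ) ^ m • (B ^ m) z := by
            rw [smul_pow, ContinuousLinearMap.smul_apply]
          rw [happ, norm_smul, norm_pow, hrn]
          calc r ^ m * ‖(B ^ m) z‖ ≤ r ^ m * (M * ‖z‖) := by
                apply mul_le_mul_of_nonneg_left _ (by positivity)
                exact le_trans ((B ^ m).le_opNorm z)
                  (mul_le_mul_of_nonneg_right (hBpow m) (norm_nonneg _))
            _ = r ^ m * M * ‖z‖ := by ring
        apply lt_of_le_of_lt hSle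
        calc r ^ m * M < 1 / M * M := mul_lt_mul_of_pos_right hm hM0
          _ = 1 := by field_simp
      set u := hunit.unit with hu
      set xr : X := (↑u⁻¹ : X →L[ℂ] X) y with hxr
      have h5 : ((1 : X →L[ℂ] X) - (r : ℂ) • B) xr = y := by
        have h6 : (((1 : X →L[ℂ] X) - (r : ℂ) • B) * (↑u⁻¹ : X →L[ℂ] X)) = 1 := by
          have huval : (↑u : X →L[ℂ] X) = (1 : X →L[ℂ] X) - (r : ℂ) • B := hunit.unit_spec
          rw [← huval]
          exact u.mul_inv
        calc ((1 : X →L[ℂ] X) - (r : ℂ) • B) xr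
            = (((1 : X →L[ℂ] X) - (r : ℂ) • B) * (↑u⁻¹ : X →L[ℂ] X)) y := rfl
          _ = y := by rw [h6]; rfl
      have hVapp' : ∀ x : X, V x = x - B x := by
        intro x
        rw [hV]
        simp [ContinuousLinearMap.sub_apply, ContinuousLinearMap.one_apply]
      have h8 : y = xr - (r : ℂ) • B xr := by
        rw [← h5]
        simp [ContinuousLinearMap.sub_apply, ContinuousLinearMap.smul_apply,
          ContinuousLinearMap.one_apply]
      have h7 : V xr - y = ((r : ℂ) - 1) • B xr := by
        rw [hVapp', h8]
        module
      have hrnorm : ‖(r : ℂ) - 1‖ = η := by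
        have he : ((r : ℝ) : ℂ) - 1 = ((-η : ℝ) : ℂ) := by
          rw [hr]; push_cast; ring
        rw [he, Complex.norm_real, norm_neg, Real.norm_eq_abs, abs_of_nonneg (le_of_lt hη0)]
      have h9 : ‖V xr - y‖ ≤ η * (M * ‖xr‖) := by
        rw [h7, norm_smul, hrnorm]
        exact mul_le_mul_of_nonneg_left (hBnorm xr) (le_of_lt hη0)
      have h12 : ‖V xr‖ ≤ ‖y‖ + η * (M * ‖xr‖) := by
        calc ‖V xr‖ = ‖y + (V xr - y)‖ := by rw [add_sub_cancel]
          _ ≤ ‖y‖ + ‖V xr - y‖ := norm_add_le _ _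
          _ ≤ ‖y‖ + η * (M * ‖xr‖) := by linarith [h9]
      have hη2' : η * (2 * K * M) ≤ 1 := by
        rw [le_div_iff₀ (by positivity : (0:ℝ) < 2 * K * M)] at hη2
        exact hη2
      have h10 : ‖xr‖ ≤ 2 * K * ‖y‖ := by
        have h11 := hVlow xr
        have hhalf : K * (η * (M * ‖xr‖)) ≤ ‖xr‖ / 2 := by
          nlinarith [norm_nonneg xr, hη0.le, hK0.le, hM0.le]
        nlinarith [h11, h12, hK0.le, norm_nonneg y]
      refine ⟨V xr, Set.mem_range_self _, ?_⟩
      rw [dist_eq_norm, norm_sub_rev]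
      calc ‖V xr - y‖ ≤ η * (M * ‖xr‖) := h9
        _ ≤ η * (M * (2 * K * ‖y‖)) := by
            apply mul_le_mul_of_nonneg_left _ (le_of_lt hη0)
            exact mul_le_mul_of_nonneg_left h10 (le_of_lt hM0)
        _ ≤ ε / (2 * M * K * ‖y‖ + 1) * (M * (2 * K * ‖y‖)) := by
            apply mul_le_mul_of_nonneg_right hη3 (by positivity)
        _ < ε := by
            rw [div_mul_eq_mul_div, div_lt_iff₀ (by positivity : (0:ℝ) < 2 * M * K * ‖y‖ + 1)]
            nlinarith [norm_nonneg y, hε]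
    rw [hclosed.closure_eq] at hmem
    exact hmem
  -- the inverse of V
  have hker : V.ker = ⊥ := LinearMap.ker_eq_bot.2 hVinj
  have hrange : V.range = ⊤ := LinearMap.range_eq_top.2 hVsurj
  set e := ContinuousLinearEquiv.ofBijective V hker hrange with he
  set Vinv : X →L[ℂ] X := (e.symm : X →L[ℂ] X) with hVinv
  have hVVinv : ∀ y : X, V (Vinv y) = y := by
    intro y
    exact ContinuousLinearEquiv.ofBijective_apply_symm_apply V hker hrange y
  have hVinvV : ∀ x : X, Vinv (V x) = x := by
    intro x
    exact ContinuousLinearEquiv.ofBijective_symm_apply_apply V hker hrange x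
  have hVinv_norm : ∀ y : X, ‖Vinv y‖ ≤ K * ‖y‖ := by
    intro y
    have := hVlow (Vinv y)
    rwa [hVVinv] at this
  -- the integral operator g
  set gfun : X → X := fun z => ∫ s in (0:ℝ)..t₀, Complex.exp (-(lam * s)) • T s z with hgfun
  have hg_add : ∀ a b : X, gfun (a + b) = gfun a + gfun b := by
    intro a b
    rw [hgfun]
    beta_reduce
    have : (fun s : ℝ => Complex.exp (-(lam * s)) • T s (a + b)) =
        fun s : ℝ => Complex.exp (-(lam * s)) • T s a + Complex.exp (-(lam * s)) • T s b := by
      funext s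
      rw [map_add, smul_add]
    rw [this]
    exact intervalIntegral.integral_add
      (sgInt_integrable hT hTM lam a le_rfl (le_of_lt ht₀))
      (sgInt_integrable hT hTM lam b le_rfl (le_of_lt ht₀))
  have hg_smul : ∀ (k : ℂ) (a : X), gfun (k • a) = k • gfun a := by
    intro k a
    rw [hgfun]
    beta_reduce
    have : (fun s : ℝ => Complex.exp (-(lam * s)) • T s (k • a)) =
        fun s : ℝ => k • (Complex.exp (-(lam * s)) • T s a) := by
      funext s
      rw [map_smul, smul_comm]
    rw [this]
    exact intervalIntegral.integral_smul k _
  have hexps : ∀ s : ℝ, ‖Complex.exp (-(lam * s))‖ = 1 := by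
    intro s
    rw [Complex.norm_exp]
    have : (-(lam * s)).re = 0 := by
      rw [hlam]
      simp [Complex.mul_re]
    rw [this, Real.exp_zero]
  have hg_bound : ∀ z : X, ‖gfun z‖ ≤ M * t₀ * ‖z‖ := by
    intro z
    have hb : ∀ s ∈ Set.uIoc (0:ℝ) t₀, ‖Complex.exp (-(lam * s)) • T s z‖ ≤ M * ‖z‖ := by
      intro s hs
      have hs0 : 0 < s := by
        rw [Set.uIoc_of_le (le_of_lt ht₀)] at hs
        exact hs.1
      rw [norm_smul, hexps s, one_mul]
      calc ‖T s z‖ ≤ ‖T s‖ * ‖z‖ := (T s).le_opNorm z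
        _ ≤ M * ‖z‖ := mul_le_mul_of_nonneg_right (hTM s hs0.le) (norm_nonneg _)
    have := intervalIntegral.norm_integral_le_of_norm_le_const hb
    rw [hgfun]
    beta_reduce
    calc ‖∫ s in (0:ℝ)..t₀, Complex.exp (-(lam * s)) • T s z‖ ≤ M * ‖z‖ * |t₀ - 0| := this
      _ = M * t₀ * ‖z‖ := by
          rw [sub_zero, abs_of_pos ht₀]; ring
  set g : X →L[ℂ] X := LinearMap.mkContinuous
    { toFun := gfun, map_add' := hg_add, map_smul' := hg_smul } (M * t₀) hg_bound with hg
  have hg_apply : ∀ z : X, g z = ∫ s in (0:ℝ)..t₀, Complex.exp (-(lam * s)) • T s z :=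
    fun z => rfl
  -- commutation of V and g
  have hTg : ∀ z : X, T t₀ (g z) = g (T t₀ z) := by
    intro z
    rw [hg_apply, hg_apply]
    rw [← (T t₀).intervalIntegral_comp_comm
      (sgInt_integrable hT hTM lam z le_rfl (le_of_lt ht₀))]
    apply intervalIntegral.integral_congr
    intro s hs
    have hs0 : 0 ≤ s := by
      rcases Set.mem_uIcc.1 hs with ⟨h1, _⟩ | ⟨h1, _⟩
      · exact h1
      · exact le_trans (le_of_lt ht₀) h1
    beta_reduce
    rw [map_smul]
    congr 1
    have e1 := hT.2.1 t₀ s (le_of_lt ht₀) hs0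
    have e2 := hT.2.1 s t₀ hs0 (le_of_lt ht₀)
    have : (T (t₀ + s)) z = (T (s + t₀)) z := by rw [add_comm]
    calc T t₀ (T s z) = T (t₀ + s) z := by rw [e1]; rfl
      _ = T (s + t₀) z := this
      _ = T s (T t₀ z) := by rw [e2]; rfl
  have hVg : ∀ z : X, V (g z) = g (V z) := by
    intro z
    rw [hVapp, hVapp, hTg, ← map_smul, ← map_sub]
  have hVinvg : ∀ z : X, Vinv (g z) = g (Vinv z) := by
    intro z
    apply hVinj
    rw [hVVinv, hVg, hVVinv]
  -- L2 : generator facts for g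
  have hgen : ∀ z : X, Tendsto (fun h : ℝ => (h : ℂ)⁻¹ • (T h (g z) - g z))
      (nhdsWithin 0 (Set.Ioi 0))
      (nhds (lam • g z - z + c • T t₀ z)) := by
    intro z
    have := c0_L2 hT hTM lam ht₀ z
    rw [← hg_apply] at this
    exact this
  have hdom : ∀ z : X, g z ∈ dom := by
    intro z
    exact (hA.1 (g z)).2 ⟨_, hgen z⟩
  have hAg : ∀ z : X, A (g z) = lam • g z - z + c • T t₀ z := by
    intro z
    exact tendsto_nhds_unique (hA.2 _ (hdom z)) (hgen z)
  have hResEq : ∀ z : X, lam • g z - A (g z) = V z := by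
    intro z
    rw [hAg, hVapp]
    abel
  -- L1 : for x in dom
  have hL1 : ∀ x ∈ dom, g (lam • x - A x) = V x := by
    intro x hx
    have h1 := c0_L1 hT hTM hA hx lam (le_of_lt ht₀)
    rw [hg_apply, hVapp]
    rw [eq_sub_iff_add_eq, add_comm, ← eq_sub_iff_add_eq] at h1
    rw [← h1]
  -- assemble the resolvent
  refine ⟨g.comp Vinv, ⟨?_, ?_, ?_⟩, ?_⟩
  · intro y
    exact hdom (Vinv y)
  · intro y
    rw [ContinuousLinearMap.comp_apply]
    rw [hResEq (Vinv y), hVVinv]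
  · intro x hx
    rw [ContinuousLinearMap.comp_apply, ← hVinvg, hL1 x hx, hVinvV]
  · apply ContinuousLinearMap.opNorm_le_bound _ (by positivity)
    intro y
    rw [ContinuousLinearMap.comp_apply]
    calc ‖g (Vinv y)‖ ≤ M * t₀ * ‖Vinv y‖ := hg_bound (Vinv y)
      _ ≤ M * t₀ * (K * ‖y‖) :=
          mul_le_mul_of_nonneg_left (hVinv_norm y) (by positivity)
      _ = M * K * t₀ * ‖y‖ := by ring
      _ ≤ M * K * max θ₁ θ₂ / |α| * ‖y‖ := by
          apply mul_le_mul_of_nonneg_right _ (norm_nonneg y)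
          rw [mul_div_assoc]
          apply mul_le_mul_of_nonneg_left _ (by positivity)
          rw [ht₀def]
          exact (div_le_div_iff_of_pos_right hα0).2 hθmax
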